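/- For any complex-valued functions G_1, ..., G_k on (0,1], squarefree integers r_1, ..., r_k with r = lcm(r_1,...,r_k), such that every prime dividing r divides at least two of the r_i, we have |∑ G_1(b_1/r_1)⋯G_k(b_k/r_k)| ≤ (1/r) ∏_{i=1}^k (r_i ∑_{b_i=1}^{r_i} |G_i(b_i/r_i)|²)^{1/2}, where the outer sum is over tuples (b_1,...,b_k) with 1 ≤ b_i ≤ r_i and b_1/r_1 + ⋯ + b_k/r_k ∈ ℤ. -/

import Mathlib

open Finset Complex

noncomputable def mvE (x : ℝ) : ℂ := Complex.exp (2 * Real.pi * Complex.I * x)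

lemma mvE_add (x y : ℝ) : mvE (x + y) = mvE x * mvE y := by
  unfold mvE
  rw [← Complex.exp_add]
  push_cast
  ring_nf

lemma mvE_int (n : ℤ) : mvE (n : ℝ) = 1 := by
  unfold mvE
  push_cast
  rw [show 2 * (Real.pi : ℂ) * Complex.I * (n : ℂ) = (n : ℂ) * (2 * Real.pi * Complex.I) by ring]
  exact Complex.exp_int_mul_two_pi_mul_I n

lemma mvE_add_int (x : ℝ) (n : ℤ) : mvE (x + n) = mvE x := by
  rw [mvE_add, mvE_int, mul_one]

lemma mvE_pow (x : ℝ) (h : ℕ) : mvE x ^ h = mvE (h * x) := by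
  unfold mvE
  rw [← Complex.exp_nat_mul]
  push_cast
  ring_nf

lemma mvE_ne_one {n : ℕ} (hn : 0 < n) {m : ℤ} (hm : ¬ (n : ℤ) ∣ m) :
    mvE ((m : ℝ) / n) ≠ 1 := by
  intro h
  rw [mvE, Complex.exp_eq_one_iff] at h
  obtain ⟨t, ht⟩ := h
  have hπ : (2 * Real.pi * Complex.I) ≠ 0 := by
    simp [Real.pi_ne_zero, Complex.I_ne_zero]
  have : ((m : ℝ) / n : ℂ) = (t : ℂ) := by
    field_simp at ht ⊢
    exact_mod_cast ht
  have hmn : (m : ℝ) / n = (t : ℝ) := by exact_mod_cast this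
  apply hm
  refine ⟨t, ?_⟩
  have hn' : (n : ℝ) ≠ 0 := by positivity
  have : (m : ℝ) = n * t := by field_simp at hmn; linarith [hmn]
  exact_mod_cast this

lemma mvE_orth {n : ℕ} (hn : 0 < n) (m : ℤ) :
    ∑ h ∈ Finset.range n, mvE ((h : ℝ) * ((m : ℝ) / n)) =
      if (n : ℤ) ∣ m then (n : ℂ) else 0 := by
  have hE : ∀ h : ℕ, mvE ((h : ℝ) * ((m : ℝ) / n)) = mvE ((m : ℝ) / n) ^ h := by
    intro h; rw [mvE_pow]
  simp_rw [hE]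
  by_cases hd : (n : ℤ) ∣ m
  · obtain ⟨c, hc⟩ := hd
    have hn' : (n : ℝ) ≠ 0 := by positivity
    have : (m : ℝ) / n = (c : ℝ) := by
      have : (m : ℝ) = n * c := by exact_mod_cast hc
      field_simp [this]
      exact this
    rw [this, mvE_int, if_pos ⟨c, hc⟩]
    simp
  · rw [if_neg hd]
    have hne := mvE_ne_one hn hd
    rw [geom_sum_eq hne]
    have : mvE ((m:ℝ)/n) ^ n = 1 := by
      rw [mvE_pow]
      have hn' : (n : ℝ) ≠ 0 := by positivity
      have : (n : ℝ) * ((m : ℝ) / n) = (m : ℝ) := by field_simp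
      rw [this, mvE_int]
    rw [this]
    simp

lemma mvE_conj (x : ℝ) : (starRingEnd ℂ) (mvE x) = mvE (-x) := by
  unfold mvE
  rw [← Complex.exp_conj]
  congr 1
  simp only [map_mul, Complex.conj_I, Complex.conj_ofReal, map_ofNat]
  push_cast
  ring

lemma mvE_mod {n : ℕ} (hn : 0 < n) (h b : ℕ) :
    mvE (((h % n : ℕ) : ℝ) * b / n) = mvE ((h : ℝ) * b / n) := by
  have hn' : (n : ℝ) ≠ 0 := by positivity
  obtain ⟨q, hq⟩ : ∃ q, h = n * q + h % n := ⟨h / n, (Nat.div_add_mod h n).symm⟩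
  have hcast : (h : ℝ) = n * q + ((h % n : ℕ) : ℝ) := by exact_mod_cast congrArg (Nat.cast : ℕ → ℝ) hq
  have key : (h : ℝ) * b / n = ((h % n : ℕ) : ℝ) * b / n + ((q * b : ℕ) : ℤ) := by
    field_simp
    push_cast
    linear_combination (b : ℝ) * hcast
  rw [key, mvE_add_int]

lemma mv_parseval {n : ℕ} (hn : 0 < n) (g : ℕ → ℂ) :
    ∑ h ∈ range n, ‖∑ c ∈ Icc 1 n, mvE ((h : ℝ) * c / n) * g c‖ ^ 2
      = (n : ℝ) * ∑ c ∈ Icc 1 n, ‖g c‖ ^ 2 := by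
  have hdvd_iff : ∀ b ∈ Icc 1 n, ∀ c ∈ Icc 1 n, c ≠ b → ¬ ((n:ℤ) ∣ (b:ℤ) - (c:ℤ)) := by
    intro b hb c hc hne hdvd
    rw [Finset.mem_Icc] at hb hc
    have : (b:ℤ) - c = 0 := by
      apply Int.eq_zero_of_abs_lt_dvd hdvd
      rw [abs_lt]
      constructor <;> [omega; omega]
    apply hne
    omega
  have main : ∑ h ∈ range n, ((Complex.normSq (∑ c ∈ Icc 1 n, mvE ((h : ℝ) * c / n) * g c) : ℝ) : ℂ)
      = ((n : ℝ) : ℂ) * ∑ c ∈ Icc 1 n, ((Complex.normSq (g c) : ℝ) : ℂ) := by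
    calc ∑ h ∈ range n, ((Complex.normSq (∑ c ∈ Icc 1 n, mvE ((h : ℝ) * c / n) * g c) : ℝ) : ℂ)
        = ∑ h ∈ range n, (∑ b ∈ Icc 1 n, mvE ((h : ℝ) * b / n) * g b) *
            (∑ c ∈ Icc 1 n, mvE (-((h : ℝ) * c / n)) * (starRingEnd ℂ) (g c)) := by
          apply Finset.sum_congr rfl
          intro h _
          rw [← Complex.mul_conj]
          congr 1
          rw [map_sum]
          apply Finset.sum_congr rfl
          intro c _
          rw [map_mul, mvE_conj]
      _ = ∑ h ∈ range n, ∑ b ∈ Icc 1 n, ∑ c ∈ Icc 1 n,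
            (mvE ((h : ℝ) * b / n) * mvE (-((h : ℝ) * c / n))) * (g b * (starRingEnd ℂ) (g c)) := by
          apply Finset.sum_congr rfl
          intro h _
          rw [Finset.sum_mul_sum]
          apply Finset.sum_congr rfl; intro b _
          apply Finset.sum_congr rfl; intro c _
          ring
      _ = ∑ b ∈ Icc 1 n, ∑ c ∈ Icc 1 n, ∑ h ∈ range n,
            (mvE ((h : ℝ) * b / n) * mvE (-((h : ℝ) * c / n))) * (g b * (starRingEnd ℂ) (g c)) := by
          rw [Finset.sum_comm]
          apply Finset.sum_congr rfl; intro b _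
          rw [Finset.sum_comm]
      _ = ∑ b ∈ Icc 1 n, ∑ c ∈ Icc 1 n,
            (if (n:ℤ) ∣ (b:ℤ) - (c:ℤ) then (n:ℂ) else 0) * (g b * (starRingEnd ℂ) (g c)) := by
          apply Finset.sum_congr rfl; intro b _
          apply Finset.sum_congr rfl; intro c _
          rw [← Finset.sum_mul, ← mvE_orth hn ((b:ℤ) - (c:ℤ))]
          congr 1
          apply Finset.sum_congr rfl; intro h _
          rw [← mvE_add]
          congr 1
          push_cast
          field_simp
          ring
      _ = ∑ b ∈ Icc 1 n, (n:ℂ) * (g b * (starRingEnd ℂ) (g b)) := by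
          apply Finset.sum_congr rfl; intro b hb
          rw [Finset.sum_eq_single b]
          · simp
          · intro c hc hne
            rw [if_neg (hdvd_iff b hb c hc hne)]
            ring
          · intro hb'; exact absurd hb hb'
      _ = ((n : ℝ) : ℂ) * ∑ c ∈ Icc 1 n, ((Complex.normSq (g c) : ℝ) : ℂ) := by
          rw [Finset.mul_sum]
          apply Finset.sum_congr rfl; intro c _
          rw [Complex.mul_conj]
          push_cast
          ring
  have main' : ∑ h ∈ range n, Complex.normSq (∑ c ∈ Icc 1 n, mvE ((h : ℝ) * c / n) * g c)
      = (n : ℝ) * ∑ c ∈ Icc 1 n, Complex.normSq (g c) := by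
    apply Complex.ofReal_injective
    push_cast [main]
    rfl
  calc ∑ h ∈ range n, ‖∑ c ∈ Icc 1 n, mvE ((h : ℝ) * c / n) * g c‖ ^ 2
      = ∑ h ∈ range n, Complex.normSq (∑ c ∈ Icc 1 n, mvE ((h : ℝ) * c / n) * g c) := by
        apply Finset.sum_congr rfl; intro h _
        rw [Complex.sq_norm]
    _ = (n : ℝ) * ∑ c ∈ Icc 1 n, Complex.normSq (g c) := main'
    _ = (n : ℝ) * ∑ c ∈ Icc 1 n, ‖g c‖ ^ 2 := by
        congr 1
        apply Finset.sum_congr rfl; intro c _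
        rw [Complex.sq_norm]

-- generalized Cauchy-Schwarz: product of ≥ 2 nonneg functions
lemma mv_gcs {ι : Type*} [DecidableEq ι] (U : Finset ℕ) :
    ∀ (n : ℕ) (s : Finset ι) (c : ι → ℕ → ℝ), s.card = n + 2 →
    (∀ i u, 0 ≤ c i u) →
    ∑ u ∈ U, ∏ i ∈ s, c i u ≤ ∏ i ∈ s, Real.sqrt (∑ u ∈ U, c i u ^ 2) := by
  intro n
  induction n with
  | zero =>
    intro s c hcard hnn
    obtain ⟨x, y, hxy, rfl⟩ := Finset.card_eq_two.mp hcard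
    rw [Finset.prod_pair hxy]
    have h1 : ∑ u ∈ U, c x u * c y u ≤
        Real.sqrt ((∑ u ∈ U, c x u ^ 2) * (∑ u ∈ U, c y u ^ 2)) := by
      rw [show (∑ u ∈ U, c x u * c y u) = Real.sqrt ((∑ u ∈ U, c x u * c y u)^2) from
        (Real.sqrt_sq (Finset.sum_nonneg fun u _ => mul_nonneg (hnn x u) (hnn y u))).symm]
      exact Real.sqrt_le_sqrt (Finset.sum_mul_sq_le_sq_mul_sq U _ _)
    rw [Real.sqrt_mul (Finset.sum_nonneg fun u _ => sq_nonneg _)] at h1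
    calc ∑ u ∈ U, ∏ i ∈ {x, y}, c i u = ∑ u ∈ U, c x u * c y u := by
          apply Finset.sum_congr rfl; intro u _; rw [Finset.prod_pair hxy]
      _ ≤ _ := h1
  | succ n ihn =>
    intro s c hcard hnn
    have hne : s.Nonempty := Finset.card_pos.mp (by omega)
    obtain ⟨x, hx⟩ := hne
    have hcard' : (s.erase x).card = n + 2 := by
      rw [Finset.card_erase_of_mem hx]; omega
    have hbound : ∀ u ∈ U, c x u ≤ Real.sqrt (∑ u ∈ U, c x u ^ 2) := by
      intro u hu
      rw [Real.le_sqrt (hnn x u)]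
      · exact Finset.single_le_sum (fun v _ => sq_nonneg (c x v)) hu
      · exact Finset.sum_nonneg fun v _ => sq_nonneg _
    calc ∑ u ∈ U, ∏ i ∈ s, c i u
        = ∑ u ∈ U, c x u * ∏ i ∈ s.erase x, c i u := by
          apply Finset.sum_congr rfl; intro u _
          rw [Finset.mul_prod_erase s (fun i => c i u) hx]
      _ ≤ ∑ u ∈ U, Real.sqrt (∑ u ∈ U, c x u ^ 2) * ∏ i ∈ s.erase x, c i u := by
          apply Finset.sum_le_sum; intro u hu
          exact mul_le_mul_of_nonneg_right (hbound u hu)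
            (Finset.prod_nonneg fun i _ => hnn i u)
      _ = Real.sqrt (∑ u ∈ U, c x u ^ 2) * ∑ u ∈ U, ∏ i ∈ s.erase x, c i u := by
          rw [Finset.mul_sum]
      _ ≤ Real.sqrt (∑ u ∈ U, c x u ^ 2) *
            ∏ i ∈ s.erase x, Real.sqrt (∑ u ∈ U, c i u ^ 2) := by
          exact mul_le_mul_of_nonneg_left (ihn _ c hcard' hnn) (Real.sqrt_nonneg _)
      _ = ∏ i ∈ s, Real.sqrt (∑ u ∈ U, c i u ^ 2) := by
          rw [Finset.mul_prod_erase s (fun i => Real.sqrt (∑ u ∈ U, c i u ^ 2)) hx]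

lemma mv_claimA : ∀ (r : ℕ), Squarefree r → ∀ (k : ℕ) (s : Fin k → ℕ) (a : Fin k → ℕ → ℝ),
    (∀ i, s i ∣ r) →
    (∀ p : ℕ, p.Prime → p ∣ r → 1 < (univ.filter (fun i => p ∣ s i)).card) →
    (∀ i x, a i (x % s i) = a i x) → (∀ i x, 0 ≤ a i x) →
    ∑ h ∈ range r, ∏ i, a i h ≤ ∏ i, Real.sqrt (∑ t ∈ range (s i), a i t ^ 2) := by
  intro r
  induction r using Nat.strong_induction_on with
  | _ r IH =>
  intro hsf k s a hdvd hcov hper hnn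
  have key : ∀ i x y, x ≡ y [MOD s i] → a i x = a i y := by
    intro i x y h
    rw [← hper i x, ← hper i y]
    exact congrArg (a i) h
  by_cases hr1 : r = 1
  · subst hr1
    have hs1 : ∀ i, s i = 1 := fun i => Nat.dvd_one.mp (hdvd i)
    have : ∀ i, Real.sqrt (∑ t ∈ range (s i), a i t ^ 2) = a i 0 := by
      intro i
      rw [hs1 i]
      simp [Real.sqrt_sq (hnn i 0)]
    rw [Finset.prod_congr rfl (fun i _ => this i)]
    simp
  -- main case
  have hr0 : r ≠ 0 := hsf.ne_zero
  set p := r.minFac with hp_def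
  have hp_prime : p.Prime := Nat.minFac_prime hr1
  have hpr : p ∣ r := Nat.minFac_dvd r
  set m := r / p with hm_def
  have hrm : r = p * m := (Nat.mul_div_cancel' hpr).symm
  have hp_pos : 0 < p := hp_prime.pos
  have hm0 : m ≠ 0 := by
    intro h; rw [h, mul_zero] at hrm; exact hr0 hrm
  have hm_pos : 0 < m := Nat.pos_of_ne_zero hm0
  have hpm : ¬ p ∣ m := by
    intro h
    obtain ⟨c, hc⟩ := h
    have : p * p ∣ r := ⟨c, by rw [hrm, hc]; ring⟩
    exact hp_prime.not_isUnit (hsf p this)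
  have hcop : Nat.Coprime p m := (Nat.Prime.coprime_iff_not_dvd hp_prime).mpr hpm
  have hmr : m ∣ r := ⟨p, by rw [hrm]; ring⟩
  have hm_lt : m < r := Nat.div_lt_self (Nat.pos_of_ne_zero hr0) hp_prime.one_lt
  have hsfm : Squarefree m := hsf.squarefree_of_dvd hmr
  -- new moduli
  set t : Fin k → ℕ := fun i => if p ∣ s i then s i / p else s i with ht_def
  have hst : ∀ i, p ∣ s i → s i = p * t i := by
    intro i h
    simp only [ht_def, if_pos h]
    exact (Nat.mul_div_cancel' h).symm
  have htm : ∀ i, t i ∣ m := by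
    intro i
    by_cases h : p ∣ s i
    · have h1 : p * t i ∣ p * m := by rw [← hst i h, ← hrm]; exact hdvd i
      exact (mul_dvd_mul_iff_left (a := p) (by positivity)).mp h1
    · simp only [ht_def, if_neg h]
      have hcop2 : Nat.Coprime (s i) p := ((Nat.Prime.coprime_iff_not_dvd hp_prime).mpr h).symm
      exact hcop2.dvd_of_dvd_mul_left (by rw [← hrm]; exact hdvd i)
  have htpos : ∀ i, 0 < t i := fun i => Nat.pos_of_dvd_of_pos (htm i) hm_pos
  have hcop_t : ∀ i, Nat.Coprime p (t i) := fun i => hcop.coprime_dvd_right (htm i)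
  have hspt : ∀ i, p ∣ s i → s i = p * t i := hst
  -- crt functions
  set crt2 : Fin k → ℕ → ℕ → ℕ :=
    fun i u v => (Nat.chineseRemainder (hcop_t i) u v : ℕ) with hcrt2_def
  have hcrt2_p : ∀ i u v, crt2 i u v ≡ u [MOD p] :=
    fun i u v => (Nat.chineseRemainder (hcop_t i) u v).2.1
  have hcrt2_t : ∀ i u v, crt2 i u v ≡ v [MOD t i] :=
    fun i u v => (Nat.chineseRemainder (hcop_t i) u v).2.2
  -- key congruence for i with p ∣ s i
  have key2 : ∀ i, p ∣ s i → ∀ x y, x ≡ y [MOD p] → x ≡ y [MOD t i] → a i x = a i y := by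
    intro i h x y h1 h2
    apply key
    rw [hst i h]
    exact (Nat.modEq_and_modEq_iff_modEq_mul (hcop_t i)).mp ⟨h1, h2⟩
  set b : Fin k → ℕ → ℝ :=
    fun i v => Real.sqrt (∑ u ∈ range p, a i (crt2 i u v) ^ 2) with hb_def
  set a' : Fin k → ℕ → ℝ := fun i => if p ∣ s i then b i else a i with ha'_def
  -- big CRT map
  set crtB : ℕ → ℕ → ℕ := fun u v => (Nat.chineseRemainder hcop u v : ℕ) % r with hcrtB_def
  have hcrtB_p : ∀ u v, crtB u v ≡ u [MOD p] := by
    intro u v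
    exact (((Nat.mod_modEq _ r).of_dvd hpr)).trans (Nat.chineseRemainder hcop u v).2.1
  have hcrtB_m : ∀ u v, crtB u v ≡ v [MOD m] := by
    intro u v
    exact (((Nat.mod_modEq _ r).of_dvd hmr)).trans (Nat.chineseRemainder hcop u v).2.2
  -- step 1 : reindex the sum over range r by range p ×ˢ range m
  have step1 : ∑ h ∈ range r, ∏ i, a i h
      = ∑ uv ∈ range p ×ˢ range m, ∏ i, a i (crtB uv.1 uv.2) := by
    apply Finset.sum_nbij' (fun h => (h % p, h % m)) (fun uv => crtB uv.1 uv.2)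
    · intro h hh
      simp only [Finset.mem_product, Finset.mem_range]
      exact ⟨Nat.mod_lt _ hp_pos, Nat.mod_lt _ hm_pos⟩
    · intro uv _
      rw [Finset.mem_range]
      show (Nat.chineseRemainder hcop uv.1 uv.2 : ℕ) % r < r
      exact Nat.mod_lt _ (Nat.pos_of_ne_zero hr0)
    · intro h hh
      rw [Finset.mem_range] at hh
      have h1 : crtB (h % p) (h % m) ≡ h [MOD p] :=
        (hcrtB_p _ _).trans (Nat.mod_modEq h p)
      have h2 : crtB (h % p) (h % m) ≡ h [MOD m] :=
        (hcrtB_m _ _).trans (Nat.mod_modEq h m)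
      have h3 : crtB (h % p) (h % m) ≡ h [MOD r] := by
        rw [hrm]
        exact (Nat.modEq_and_modEq_iff_modEq_mul hcop).mp ⟨h1, h2⟩
      have hlt : crtB (h % p) (h % m) < r := by
        show (Nat.chineseRemainder hcop (h % p) (h % m) : ℕ) % r < r
        exact Nat.mod_lt _ (Nat.pos_of_ne_zero hr0)
      have := h3
      unfold Nat.ModEq at this
      rwa [Nat.mod_eq_of_lt hlt, Nat.mod_eq_of_lt hh] at this
    · intro uv huv
      simp only [Finset.mem_product, Finset.mem_range] at huv
      have h1 : crtB uv.1 uv.2 % p = uv.1 := by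
        have := hcrtB_p uv.1 uv.2
        unfold Nat.ModEq at this
        rwa [Nat.mod_eq_of_lt huv.1] at this
      have h2 : crtB uv.1 uv.2 % m = uv.2 := by
        have := hcrtB_m uv.1 uv.2
        unfold Nat.ModEq at this
        rwa [Nat.mod_eq_of_lt huv.2] at this
      simp [h1, h2]
    · intro h hh
      apply Finset.prod_congr rfl
      intro i _
      apply key
      apply Nat.ModEq.symm
      apply Nat.ModEq.of_dvd (hdvd i)
      rw [hrm]
      exact (Nat.modEq_and_modEq_iff_modEq_mul hcop).mp
        ⟨(hcrtB_p _ _).trans (Nat.mod_modEq h p), (hcrtB_m _ _).trans (Nat.mod_modEq h m)⟩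
  -- coverage at p
  have hI : 1 < (univ.filter (fun i => p ∣ s i)).card := hcov p hp_prime hpr
  obtain ⟨n2, hn2⟩ : ∃ n, (univ.filter (fun i : Fin k => p ∣ s i)).card = n + 2 :=
    ⟨(univ.filter (fun i : Fin k => p ∣ s i)).card - 2, by omega⟩
  -- step 2 : per-v bound
  have step2 : ∀ v, ∑ u ∈ range p, ∏ i, a i (crtB u v) ≤ ∏ i, a' i v := by
    intro v
    have hsplit : ∀ u, ∏ i, a i (crtB u v) =
        (∏ i ∈ univ.filter (fun i => ¬ p ∣ s i), a i v) *
          ∏ i ∈ univ.filter (fun i => p ∣ s i), a i (crt2 i u v) := by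
      intro u
      rw [← Finset.prod_filter_mul_prod_filter_not univ (fun i => p ∣ s i)
        (fun i => a i (crtB u v)), mul_comm]
      congr 1
      · apply Finset.prod_congr rfl
        intro i hi
        rw [Finset.mem_filter] at hi
        apply key
        have h1 : s i ∣ m := by
          have : t i = s i := by simp only [ht_def, if_neg hi.2]
          rw [← this]; exact htm i
        exact (hcrtB_m u v).of_dvd h1
      · apply Finset.prod_congr rfl
        intro i hi
        rw [Finset.mem_filter] at hi
        apply key2 i hi.2
        · exact (hcrtB_p u v).trans (hcrt2_p i u v).symm
        · exact ((hcrtB_m u v).of_dvd (htm i)).trans (hcrt2_t i u v).symm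
    calc ∑ u ∈ range p, ∏ i, a i (crtB u v)
        = (∏ i ∈ univ.filter (fun i => ¬ p ∣ s i), a i v) *
            ∑ u ∈ range p, ∏ i ∈ univ.filter (fun i => p ∣ s i), a i (crt2 i u v) := by
          rw [Finset.mul_sum]
          exact Finset.sum_congr rfl (fun u _ => hsplit u)
      _ ≤ (∏ i ∈ univ.filter (fun i => ¬ p ∣ s i), a i v) *
            ∏ i ∈ univ.filter (fun i => p ∣ s i),
              Real.sqrt (∑ u ∈ range p, a i (crt2 i u v) ^ 2) := by
          apply mul_le_mul_of_nonneg_left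
          · exact mv_gcs (range p) n2 _ (fun i u => a i (crt2 i u v)) hn2
              (fun i u => hnn i _)
          · exact Finset.prod_nonneg fun i _ => hnn i v
      _ = ∏ i, a' i v := by
          rw [← Finset.prod_filter_mul_prod_filter_not univ (fun i => p ∣ s i)
            (fun i => a' i v), mul_comm]
          congr 1
          · apply Finset.prod_congr rfl
            intro i hi
            rw [Finset.mem_filter] at hi
            simp only [ha'_def, hb_def, if_pos hi.2]
          · apply Finset.prod_congr rfl
            intro i hi
            rw [Finset.mem_filter] at hi
            simp only [ha'_def, if_neg hi.2]
  -- IH hypotheses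
  have hcov' : ∀ q : ℕ, q.Prime → q ∣ m → 1 < (univ.filter (fun i => q ∣ t i)).card := by
    intro q hq hqm
    have hqp : q ≠ p := by
      rintro rfl
      exact hpm hqm
    have hfq : univ.filter (fun i : Fin k => q ∣ t i) = univ.filter (fun i => q ∣ s i) := by
      apply Finset.filter_congr
      intro i _
      by_cases hps : p ∣ s i
      · have h2 : (q ∣ t i) ↔ (q ∣ s i) := by
          constructor
          · intro h; rw [hst i hps]; exact Dvd.dvd.mul_left h p
          · intro h
            rw [hst i hps] at h
            rcases (Nat.Prime.dvd_mul hq).mp h with h' | h'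
            · exact absurd ((Nat.prime_dvd_prime_iff_eq hq hp_prime).mp h') hqp
            · exact h'
        simp [h2]
      · simp only [ht_def, if_neg hps]
    rw [hfq]
    exact hcov q hq (hqm.trans hmr)
  have hper' : ∀ i x, a' i (x % t i) = a' i x := by
    intro i x
    by_cases hps : p ∣ s i
    · simp only [ha'_def, hb_def, if_pos hps]
      congr 1
      apply Finset.sum_congr rfl
      intro u _
      congr 1
      apply key2 i hps
      · exact (hcrt2_p i u _).trans (hcrt2_p i u x).symm
      · exact ((hcrt2_t i u _).trans (Nat.mod_modEq x (t i))).trans (hcrt2_t i u x).symm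
    · simp only [ha'_def, ht_def, if_neg hps]
      exact hper i x
  have hnn' : ∀ i x, 0 ≤ a' i x := by
    intro i x
    by_cases hps : p ∣ s i
    · simp only [ha'_def, if_pos hps]; exact Real.sqrt_nonneg _
    · simp only [ha'_def, if_neg hps]; exact hnn i x
  have ihm := IH m hm_lt hsfm k t a' htm hcov' hper' hnn'
  -- final equality of RHS products
  have final : ∀ i, Real.sqrt (∑ w ∈ range (t i), a' i w ^ 2)
      = Real.sqrt (∑ x ∈ range (s i), a i x ^ 2) := by
    intro i
    by_cases hps : p ∣ s i
    · have hspos : 0 < s i := Nat.pos_of_dvd_of_pos (hdvd i) (Nat.pos_of_ne_zero hr0)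
      have hpsi : p ∣ s i := hps
      have htsi : t i ∣ s i := ⟨p, by rw [hst i hps]; ring⟩
      congr 1
      have hsq : ∀ w, a' i w ^ 2 = ∑ u ∈ range p, a i (crt2 i u w) ^ 2 := by
        intro w
        simp only [ha'_def, hb_def, if_pos hps]
        exact Real.sq_sqrt (Finset.sum_nonneg fun u _ => sq_nonneg _)
      rw [Finset.sum_congr rfl (fun w _ => hsq w)]
      rw [Finset.sum_comm]
      rw [← Finset.sum_product' (s := range p) (t := range (t i))
        (f := fun u w => a i (crt2 i u w) ^ 2)]
      symm
      apply Finset.sum_nbij' (fun x => (x % p, x % t i))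
        (fun uw => crt2 i uw.1 uw.2 % s i)
      · intro x hx
        simp only [Finset.mem_product, Finset.mem_range]
        exact ⟨Nat.mod_lt _ hp_pos, Nat.mod_lt _ (htpos i)⟩
      · intro uw _
        rw [Finset.mem_range]
        exact Nat.mod_lt _ hspos
      · intro x hx
        rw [Finset.mem_range] at hx
        have h1 : crt2 i (x % p) (x % t i) ≡ x [MOD p] :=
          (hcrt2_p i _ _).trans (Nat.mod_modEq x p)
        have h2 : crt2 i (x % p) (x % t i) ≡ x [MOD t i] :=
          (hcrt2_t i _ _).trans (Nat.mod_modEq x (t i))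
        have h3 : crt2 i (x % p) (x % t i) ≡ x [MOD s i] := by
          rw [hst i hps]
          exact (Nat.modEq_and_modEq_iff_modEq_mul (hcop_t i)).mp ⟨h1, h2⟩
        unfold Nat.ModEq at h3
        rwa [Nat.mod_eq_of_lt hx] at h3
      · intro uw huw
        simp only [Finset.mem_product, Finset.mem_range] at huw
        have h1 : crt2 i uw.1 uw.2 % s i % p = uw.1 := by
          rw [Nat.mod_mod_of_dvd _ hpsi]
          have := hcrt2_p i uw.1 uw.2
          unfold Nat.ModEq at this
          rwa [Nat.mod_eq_of_lt huw.1] at this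
        have h2 : crt2 i uw.1 uw.2 % s i % t i = uw.2 := by
          rw [Nat.mod_mod_of_dvd _ htsi]
          have := hcrt2_t i uw.1 uw.2
          unfold Nat.ModEq at this
          rwa [Nat.mod_eq_of_lt huw.2] at this
        simp [h1, h2]
      · intro x hx
        congr 1
        apply key2 i hps
        · exact ((hcrt2_p i _ _).trans (Nat.mod_modEq x p)).symm
        · exact ((hcrt2_t i _ _).trans (Nat.mod_modEq x (t i))).symm
    · simp only [ha'_def, ht_def, if_neg hps]
  -- assemble
  calc ∑ h ∈ range r, ∏ i, a i h
      = ∑ uv ∈ range p ×ˢ range m, ∏ i, a i (crtB uv.1 uv.2) := step1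
    _ = ∑ u ∈ range p, ∑ v ∈ range m, ∏ i, a i (crtB u v) :=
        Finset.sum_product _ _ _
    _ = ∑ v ∈ range m, ∑ u ∈ range p, ∏ i, a i (crtB u v) := Finset.sum_comm
    _ ≤ ∑ v ∈ range m, ∏ i, a' i v := Finset.sum_le_sum (fun v _ => step2 v)
    _ ≤ ∏ i, Real.sqrt (∑ w ∈ range (t i), a' i w ^ 2) := ihm
    _ = ∏ i, Real.sqrt (∑ x ∈ range (s i), a i x ^ 2) :=
        Finset.prod_congr rfl (fun i _ => final i)

lemma mv_sum_exp' {k : ℕ} (f : Fin k → ℝ) :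
    mvE (∑ i, f i) = ∏ i, mvE (f i) := by
  unfold mvE
  rw [← Complex.exp_sum]
  congr 1
  push_cast
  rw [Finset.mul_sum]

lemma mv_squarefree_lcm {k : ℕ} (r : Fin k → ℕ) (hsf : ∀ i, Squarefree (r i)) :
    Squarefree (Finset.univ.lcm r) := by
  have key : ∀ s : Finset (Fin k), Squarefree (s.lcm r) := by
    intro s
    induction s using Finset.induction_on with
    | empty => rw [Finset.lcm_empty]; exact squarefree_one
    | insert _ _ hx ih =>
      rename_i x s'
      rw [Finset.lcm_insert, lcm_eq_nat_lcm]
      have h1 : r x ≠ 0 := (hsf x).ne_zero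
      have h2 : s'.lcm r ≠ 0 := ih.ne_zero
      have h3 : Nat.lcm (r x) (s'.lcm r) ≠ 0 := Nat.lcm_ne_zero h1 h2
      rw [Nat.squarefree_iff_factorization_le_one h3, Nat.factorization_lcm h1 h2]
      intro p
      simp only [Finsupp.sup_apply]
      exact sup_le ((Nat.squarefree_iff_factorization_le_one h1).mp (hsf x) p)
        ((Nat.squarefree_iff_factorization_le_one h2).mp ih p)
  exact key univ

theorem stmt_0 (k : ℕ) (r : Fin k → ℕ) (hsf : ∀ i, Squarefree (r i))
    (hpos : ∀ i, 0 < r i)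
    (hp : ∀ p : ℕ, p.Prime → p ∣ Finset.univ.lcm r →
      1 < (Finset.univ.filter (fun i => p ∣ r i)).card)
    (G : Fin k → ℝ → ℂ) :
    ‖∑ b ∈ (Fintype.piFinset fun i => Finset.Icc 1 (r i)).filter
        (fun b => (∑ i, (b i : ℚ) / (r i : ℚ)).den = 1),
      ∏ i, G i ((b i : ℝ) / (r i : ℝ))‖ ≤
    (1 / ((Finset.univ.lcm r : ℕ) : ℝ)) *
      ∏ i, ((r i : ℝ) * ∑ b ∈ Finset.Icc 1 (r i), ‖G i ((b : ℝ) / (r i : ℝ))‖ ^ 2)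
        ^ ((1 : ℝ) / 2) := by
  classical
  set R := Finset.univ.lcm r with hR_def
  have hdvd : ∀ i, r i ∣ R := fun i => Finset.dvd_lcm (mem_univ i)
  have hsfR : Squarefree R := mv_squarefree_lcm r hsf
  have hR0 : R ≠ 0 := hsfR.ne_zero
  have hRpos : 0 < R := Nat.pos_of_ne_zero hR0
  have hRr : ((R : ℕ) : ℝ) ≠ 0 := by positivity
  have hRc : ((R : ℕ) : ℂ) ≠ 0 := by exact_mod_cast Nat.cast_ne_zero.mpr hR0
  have hq : ∀ i, (R / r i) * r i = R := fun i => Nat.div_mul_cancel (hdvd i)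
  have hqR : ∀ i, ((R / r i : ℕ) : ℝ) * ((r i : ℕ) : ℝ) = (R : ℝ) := by
    intro i; exact_mod_cast congrArg (Nat.cast : ℕ → ℝ) (hq i)
  have hrr : ∀ i, ((r i : ℕ) : ℝ) ≠ 0 := fun i => by
    have := hpos i; positivity
  set M : (Fin k → ℕ) → ℕ := fun b => ∑ i, b i * (R / r i) with hM_def
  -- characterize the congruence condition
  have C1 : ∀ b : Fin k → ℕ,
      ((∑ i, (b i : ℚ) / (r i : ℚ)).den = 1) ↔ ((R : ℤ) ∣ (M b : ℤ)) := by
    intro b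
    have hsum : (∑ i, (b i : ℚ) / (r i : ℚ)) = (M b : ℚ) / (R : ℚ) := by
      have : ((M b : ℕ) : ℚ) = ∑ i, (b i : ℚ) * ((R / r i : ℕ) : ℚ) := by
        simp only [hM_def]; push_cast; rfl
      rw [this, Finset.sum_div]
      apply Finset.sum_congr rfl
      intro i _
      have hqQ : ((R / r i : ℕ) : ℚ) * ((r i : ℕ) : ℚ) = (R : ℚ) := by
        exact_mod_cast congrArg (Nat.cast : ℕ → ℚ) (hq i)
      have h1 : ((r i : ℕ) : ℚ) ≠ 0 := by
        have := hpos i; positivity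
      have h2 : ((R : ℕ) : ℚ) ≠ 0 := by positivity
      rw [div_eq_div_iff h1 h2]
      linear_combination (-(b i : ℚ)) * hqQ
    rw [hsum]
    constructor
    · intro hden
      have := ((M b : ℚ) / (R : ℚ)).den_eq_one_iff.mp hden
      have h2 : ((R : ℕ) : ℚ) ≠ 0 := by positivity
      have hMeq : ((M b : ℕ) : ℚ) = ((M b : ℚ) / (R : ℚ)).num * (R : ℚ) := by
        calc ((M b : ℕ) : ℚ) = ((M b : ℚ) / (R : ℚ)) * (R : ℚ) := (div_mul_cancel₀ _ h2).symm
          _ = ((M b : ℚ) / (R : ℚ)).num * (R : ℚ) := by rw [this]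
      refine ⟨((M b : ℚ) / (R : ℚ)).num, ?_⟩
      have h3 : ((M b : ℕ) : ℤ) = ((M b : ℚ) / (R : ℚ)).num * (R : ℤ) := by exact_mod_cast hMeq
      exact h3.trans (mul_comm _ _)
    · rintro ⟨c, hc⟩
      have hcQ : ((M b : ℕ) : ℚ) = (R : ℚ) * (c : ℚ) := by exact_mod_cast hc
      have h2 : ((R : ℕ) : ℚ) ≠ 0 := by positivity
      have : (M b : ℚ) / (R : ℚ) = (c : ℚ) := by rw [hcQ]; field_simp
      rw [this]
      exact Rat.den_intCast c
  -- expand the sum via characters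
  have expand : ∑ b ∈ (Fintype.piFinset fun i => Finset.Icc 1 (r i)).filter
        (fun b => (∑ i, (b i : ℚ) / (r i : ℚ)).den = 1),
      ∏ i, G i ((b i : ℝ) / (r i : ℝ))
      = (1 / (R : ℂ)) * ∑ h ∈ range R,
          ∏ i, (∑ c ∈ Icc 1 (r i), mvE ((h : ℝ) * c / (r i)) * G i ((c : ℝ) / (r i))) := by
    have hfilter : (Fintype.piFinset fun i => Finset.Icc 1 (r i)).filter
          (fun b => (∑ i, (b i : ℚ) / (r i : ℚ)).den = 1)
        = (Fintype.piFinset fun i => Finset.Icc 1 (r i)).filter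
          (fun b => (R : ℤ) ∣ (M b : ℤ)) := by
      apply Finset.filter_congr
      intro b _
      simp [C1 b]
    rw [hfilter, Finset.sum_filter]
    calc ∑ b ∈ Fintype.piFinset (fun i => Finset.Icc 1 (r i)),
          (if (R : ℤ) ∣ (M b : ℤ) then ∏ i, G i ((b i : ℝ) / (r i : ℝ)) else 0)
        = ∑ b ∈ Fintype.piFinset (fun i => Finset.Icc 1 (r i)),
            (1 / (R : ℂ)) * ∑ h ∈ range R,
              mvE ((h : ℝ) * ((((M b : ℕ) : ℤ) : ℝ) / R)) * ∏ i, G i ((b i : ℝ) / (r i : ℝ)) := by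
          apply Finset.sum_congr rfl
          intro b _
          rw [← Finset.sum_mul, mvE_orth hRpos ((M b : ℕ) : ℤ)]
          by_cases hc : (R : ℤ) ∣ ((M b : ℕ) : ℤ)
          · rw [if_pos hc, if_pos hc]
            field_simp
          · rw [if_neg hc, if_neg hc]
            simp
      _ = (1 / (R : ℂ)) * ∑ h ∈ range R,
            ∑ b ∈ Fintype.piFinset (fun i => Finset.Icc 1 (r i)),
              mvE ((h : ℝ) * ((((M b : ℕ) : ℤ) : ℝ) / R)) * ∏ i, G i ((b i : ℝ) / (r i : ℝ)) := by
          rw [← Finset.mul_sum]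
          congr 1
          rw [Finset.sum_comm]
      _ = (1 / (R : ℂ)) * ∑ h ∈ range R,
            ∏ i, (∑ c ∈ Icc 1 (r i), mvE ((h : ℝ) * c / (r i)) * G i ((c : ℝ) / (r i))) := by
          congr 1
          apply Finset.sum_congr rfl
          intro h _
          rw [Finset.prod_univ_sum]
          apply Finset.sum_congr rfl
          intro b _
          have harg : (h : ℝ) * ((((M b : ℕ) : ℤ) : ℝ) / R)
              = ∑ i, (h : ℝ) * (b i) / (r i) := by
            have hM : (((M b : ℕ) : ℤ) : ℝ) = ∑ i, (b i : ℝ) * ((R / r i : ℕ) : ℝ) := by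
              simp only [hM_def]; push_cast; rfl
            rw [hM, Finset.sum_div, Finset.mul_sum]
            apply Finset.sum_congr rfl
            intro j _
            have h1 := hrr j
            field_simp
            linear_combination (h : ℝ) * (b j : ℝ) * hqR j
          rw [harg, mv_sum_exp', ← Finset.prod_mul_distrib]
  rw [expand]
  set a : Fin k → ℕ → ℝ := fun i h =>
    ‖∑ c ∈ Icc 1 (r i), mvE ((h : ℝ) * c / (r i)) * G i ((c : ℝ) / (r i))‖ with ha_def
  have hper : ∀ i x, a i (x % r i) = a i x := by
    intro i x
    simp only [ha_def]
    congr 1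
    apply Finset.sum_congr rfl
    intro c _
    rw [mvE_mod (hpos i) x c]
  have hnn : ∀ i x, 0 ≤ a i x := fun i x => norm_nonneg _
  have hRnn : (0:ℝ) ≤ 1 / (R : ℝ) := by positivity
  calc ‖(1 / (R : ℂ)) * ∑ h ∈ range R,
          ∏ i, (∑ c ∈ Icc 1 (r i), mvE ((h : ℝ) * c / (r i)) * G i ((c : ℝ) / (r i)))‖
      = (1 / (R : ℝ)) * ‖∑ h ∈ range R,
          ∏ i, (∑ c ∈ Icc 1 (r i), mvE ((h : ℝ) * c / (r i)) * G i ((c : ℝ) / (r i)))‖ := by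
        rw [norm_mul]
        congr 1
        simp
    _ ≤ (1 / (R : ℝ)) * ∑ h ∈ range R, ∏ i, a i h := by
        apply mul_le_mul_of_nonneg_left _ hRnn
        refine (norm_sum_le _ _).trans ?_
        apply Finset.sum_le_sum
        intro h _
        rw [norm_prod]
    _ ≤ (1 / (R : ℝ)) * ∏ i, Real.sqrt (∑ w ∈ range (r i), a i w ^ 2) := by
        apply mul_le_mul_of_nonneg_left _ hRnn
        exact mv_claimA R hsfR k r a hdvd hp hper hnn
    _ = (1 / (R : ℝ)) *
        ∏ i, ((r i : ℝ) * ∑ b ∈ Finset.Icc 1 (r i), ‖G i ((b : ℝ) / (r i : ℝ))‖ ^ 2)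
          ^ ((1 : ℝ) / 2) := by
        congr 1
        apply Finset.prod_congr rfl
        intro i _
        have hps : ∑ w ∈ range (r i), a i w ^ 2
            = (r i : ℝ) * ∑ c ∈ Icc 1 (r i), ‖G i ((c : ℝ) / (r i))‖ ^ 2 :=
          mv_parseval (hpos i) (fun c => G i ((c : ℝ) / (r i)))
        rw [hps, Real.sqrt_eq_rpow]
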